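/- Let R be a polynomial ring over a field and let I ⊂ R be an ideal of codimension 2 with a Hilbert–Burch resolution 0 → R^{n−1} → Rⁿ → I → 0. Let q, f ∈ R be forms with q nonzero, f ∈ I, and gcd(q, f) = 1 with f ∉ qI. Then the ideal J = (qI, f) = qI + (f) has projective dimension at most that of I, and in fact J admits a free resolution 0 → R^{n−1} ⊕ R → R^{n+1} → J → 0; in particular J is a perfect ideal of codimension 2 (Cohen–Macaulay). -/

import Mathlib

open MvPolynomial

/-- The height (codimension) of an ideal: the infimum of the heights of the primes
containing it, in the prime spectrum ordered by inclusion. -/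
noncomputable def idealHeight {R : Type*} [CommRing R] (I : Ideal R) : ℕ∞ :=
  ⨅ P ∈ {P : PrimeSpectrum R | I ≤ P.asIdeal}, Order.height P

set_option maxHeartbeats 1000000 in
/-- If `I` is a codimension-2 ideal of a polynomial ring with a Hilbert–Burch resolution
`0 → R^{n−1} → Rⁿ → I → 0`, and `q, f` are forms with `q ≠ 0`, `f ∈ I`, `gcd(q,f) = 1`,
`f ∉ qI`, then `J = qI + (f)` admits a free resolution
`0 → R^{n−1} ⊕ R → R^{n+1} → J → 0`; in particular `J` is perfect of codimension `2`. -/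
theorem hilbertBurch_qf_type {k : Type} [Field k] {m n : ℕ} (hn : 2 ≤ n)
    (I : Ideal (MvPolynomial (Fin m) k))
    (g₂ : (Fin (n - 1) → MvPolynomial (Fin m) k) →ₗ[MvPolynomial (Fin m) k]
      (Fin n → MvPolynomial (Fin m) k))
    (g₁ : (Fin n → MvPolynomial (Fin m) k) →ₗ[MvPolynomial (Fin m) k]
      MvPolynomial (Fin m) k)
    (hinj : Function.Injective g₂) (hex : Function.Exact g₂ g₁)
    (hrng : LinearMap.range g₁ = I.restrictScalars _)
    (hhtI : idealHeight I = 2)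
    (q f : MvPolynomial (Fin m) k) (hq : q ≠ 0) (hfI : f ∈ I)
    (hcop : IsRelPrime q f) (hfqI : f ∉ Ideal.span {q} * I) :
    (∃ (h₂ : ((Fin (n - 1) → MvPolynomial (Fin m) k) × MvPolynomial (Fin m) k)
        →ₗ[MvPolynomial (Fin m) k] (Fin (n + 1) → MvPolynomial (Fin m) k))
      (h₁ : (Fin (n + 1) → MvPolynomial (Fin m) k) →ₗ[MvPolynomial (Fin m) k]
        MvPolynomial (Fin m) k),
      Function.Injective h₂ ∧ Function.Exact h₂ h₁ ∧
        LinearMap.range h₁ = (Ideal.span {q} * I + Ideal.span {f}).restrictScalars _) ∧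
    idealHeight (Ideal.span {q} * I + Ideal.span {f}) = 2 := by
  constructor
  · -- the resolution
    obtain ⟨y, hy⟩ : f ∈ LinearMap.range g₁ := by rw [hrng]; exact hfI
    -- the equivalence (MvPolynomial (Fin m) k)^{n+1} ≃ (MvPolynomial (Fin m) k)^n × (MvPolynomial (Fin m) k)
    let E : (Fin (n + 1) → (MvPolynomial (Fin m) k)) ≃ₗ[(MvPolynomial (Fin m) k)] (Fin n → (MvPolynomial (Fin m) k)) × (MvPolynomial (Fin m) k) :=
      (LinearEquiv.funCongrLeft (MvPolynomial (Fin m) k) (MvPolynomial (Fin m) k) finSumFinEquiv).trans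
        ((LinearEquiv.sumArrowLequivProdArrow (Fin n) (Fin 1) (MvPolynomial (Fin m) k) (MvPolynomial (Fin m) k)).trans
          (LinearEquiv.prodCongr (LinearEquiv.refl (MvPolynomial (Fin m) k) (Fin n → (MvPolynomial (Fin m) k))) (LinearEquiv.funUnique (Fin 1) (MvPolynomial (Fin m) k) (MvPolynomial (Fin m) k))))
    -- the maps on the product model
    let H₁ : ((Fin n → (MvPolynomial (Fin m) k)) × (MvPolynomial (Fin m) k)) →ₗ[(MvPolynomial (Fin m) k)] (MvPolynomial (Fin m) k) :=
      q • (g₁ ∘ₗ LinearMap.fst (MvPolynomial (Fin m) k) _ _) + f • LinearMap.snd (MvPolynomial (Fin m) k) _ _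
    let H₂ : ((Fin (n - 1) → (MvPolynomial (Fin m) k)) × (MvPolynomial (Fin m) k)) →ₗ[(MvPolynomial (Fin m) k)] (Fin n → (MvPolynomial (Fin m) k)) × (MvPolynomial (Fin m) k) :=
      LinearMap.prod (g₂ ∘ₗ LinearMap.fst (MvPolynomial (Fin m) k) _ _ - (LinearMap.snd (MvPolynomial (Fin m) k) _ _).smulRight y)
        (q • LinearMap.snd (MvPolynomial (Fin m) k) _ _)
    have hH₁ : ∀ z : (Fin n → (MvPolynomial (Fin m) k)) × (MvPolynomial (Fin m) k), H₁ z = q * g₁ z.1 + f * z.2 := by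
      intro z; simp [H₁, smul_eq_mul]
    have hH₂ : ∀ w : (Fin (n - 1) → (MvPolynomial (Fin m) k)) × (MvPolynomial (Fin m) k), H₂ w = (g₂ w.1 - w.2 • y, q * w.2) := by
      intro w; simp [H₂, smul_eq_mul]
    have hH₂inj : Function.Injective H₂ := by
      rw [← LinearMap.ker_eq_bot, Submodule.eq_bot_iff]
      intro w hw
      have hw0 : H₂ w = 0 := hw
      rw [hH₂, Prod.ext_iff] at hw0
      obtain ⟨hw1, hw2⟩ := hw0
      have hw2' : w.2 = 0 := by
        rcases mul_eq_zero.mp hw2 with h | h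
        · exact absurd h hq
        · exact h
      have hw1' : g₂ w.1 = 0 := by
        rw [hw2'] at hw1; simpa using hw1
      have : w.1 = 0 := hinj (by simpa using hw1')
      exact Prod.ext this hw2'
    have hexact : Function.Exact H₂ H₁ := by
      intro z
      constructor
      · intro hz
        have hz' : q * g₁ z.1 + f * z.2 = 0 := by rw [← hH₁]; exact hz
        have hdvd : q ∣ z.2 := by
          refine hcop.dvd_of_dvd_mul_left ⟨-(g₁ z.1), ?_⟩
          linear_combination hz'
        obtain ⟨s, hs⟩ := hdvd
        have hgz : g₁ z.1 + s * f = 0 := by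
          have h0 : q * (g₁ z.1 + s * f) = 0 := by
            rw [hs] at hz'; linear_combination hz'
          rcases mul_eq_zero.mp h0 with h | h
          · exact absurd h hq
          · exact h
        have h2 : g₁ (z.1 + s • y) = 0 := by
          rw [map_add, map_smul, hy, smul_eq_mul]; exact hgz
        obtain ⟨v, hv⟩ := (hex (z.1 + s • y)).mp h2
        refine ⟨(v, s), ?_⟩
        rw [hH₂]
        refine Prod.ext ?_ hs.symm
        show g₂ v - s • y = z.1
        rw [hv]; abel
      · rintro ⟨w, rfl⟩
        rw [hH₁, hH₂]
        have h0 : g₁ (g₂ w.1) = 0 := hex.apply_apply_eq_zero w.1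
        show q * g₁ (g₂ w.1 - w.2 • y) + f * (q * w.2) = 0
        rw [map_sub, map_smul, h0, hy, smul_eq_mul]
        ring
    refine ⟨E.symm.toLinearMap ∘ₗ H₂, H₁ ∘ₗ E.toLinearMap, ?_, ?_, ?_⟩
    · intro a b hab
      exact hH₂inj (E.symm.injective hab)
    · intro z
      constructor
      · intro hz
        have hz' : H₁ (E z) = 0 := hz
        obtain ⟨w, hw⟩ := (hexact (E z)).mp hz'
        refine ⟨w, ?_⟩
        show E.symm (H₂ w) = z
        rw [hw]; exact E.symm_apply_apply z
      · rintro ⟨w, rfl⟩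
        show H₁ (E (E.symm (H₂ w))) = 0
        rw [E.apply_symm_apply]
        exact (hexact (H₂ w)).mpr ⟨w, rfl⟩
    · have hr : LinearMap.range (H₁ ∘ₗ E.toLinearMap) = LinearMap.range H₁ := by
        rw [LinearMap.range_comp, LinearEquiv.range, Submodule.map_top]
      rw [hr]
      ext x
      rw [Submodule.restrictScalars_mem, Submodule.add_eq_sup]
      constructor
      · rintro ⟨z, rfl⟩
        rw [hH₁]
        refine Submodule.add_mem_sup ?_ ?_
        · refine Ideal.mem_span_singleton_mul.mpr ⟨g₁ z.1, ?_, rfl⟩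
          have : g₁ z.1 ∈ LinearMap.range g₁ := ⟨z.1, rfl⟩
          rw [hrng] at this; exact this
        · exact Ideal.mem_span_singleton'.mpr ⟨z.2, by ring⟩
      · intro hx
        obtain ⟨a, ha, b, hb, rfl⟩ := Submodule.mem_sup.mp hx
        obtain ⟨c, hcI, rfl⟩ := Ideal.mem_span_singleton_mul.mp ha
        obtain ⟨t, rfl⟩ := Ideal.mem_span_singleton'.mp hb
        have : c ∈ LinearMap.range g₁ := by rw [hrng]; exact hcI
        obtain ⟨u, hu⟩ := this
        exact ⟨(u, t), by rw [hH₁]; rw [hu]; ring⟩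
  · -- the height
    refine le_antisymm ?_ ?_
    · -- ≤ 2, since J ≤ I
      have hJI : Ideal.span {q} * I + Ideal.span {f} ≤ I :=
        sup_le Ideal.mul_le_right (Ideal.span_le.mpr (by simpa using hfI))
      calc idealHeight (Ideal.span {q} * I + Ideal.span {f}) ≤ idealHeight I := by
            simp only [idealHeight]
            exact le_iInf₂ fun P hP => iInf₂_le P (hJI.trans hP)
        _ = 2 := hhtI
    · -- ≥ 2
      simp only [idealHeight]
      refine le_iInf₂ fun P hP => ?_
      have hP' : Ideal.span {q} * I + Ideal.span {f} ≤ P.asIdeal := hP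
      have hfP : f ∈ P.asIdeal :=
        hP' (Submodule.mem_sup_right (Ideal.mem_span_singleton_self f))
      have hmul : Ideal.span {q} * I ≤ P.asIdeal := le_trans le_sup_left hP'
      rcases P.isPrime.mul_le.mp hmul with hqP | hIP
      · -- q ∈ P
        have hqP' : q ∈ P.asIdeal := hqP (Ideal.mem_span_singleton_self q)
        have hassoc := UniqueFactorizationMonoid.factors_prod hq
        have hprodP : (UniqueFactorizationMonoid.factors q).prod ∈ P.asIdeal := by
          obtain ⟨u, hu⟩ := hassoc
          have heq : (UniqueFactorizationMonoid.factors q).prod = q * ((u⁻¹ : (MvPolynomial (Fin m) k)ˣ) : MvPolynomial (Fin m) k) := by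
            rw [Units.eq_mul_inv_iff_mul_eq]; exact hu
          rw [heq]
          exact Ideal.mul_mem_right _ _ hqP'
        obtain ⟨p, hpf, hpP⟩ :=
          (P.isPrime.multiset_prod_mem_iff_exists_mem _).mp hprodP
        have hp : Prime p := UniqueFactorizationMonoid.prime_of_factor p hpf
        have hpq : p ∣ q := UniqueFactorizationMonoid.dvd_of_mem_factors hpf
        have hpf' : ¬ p ∣ f := fun h => hp.not_unit (hcop hpq h)
        let P0 : PrimeSpectrum (MvPolynomial (Fin m) k) := ⟨⊥, Ideal.bot_prime⟩
        let P1 : PrimeSpectrum (MvPolynomial (Fin m) k) :=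
          ⟨Ideal.span {p}, (Ideal.span_singleton_prime hp.ne_zero).mpr hp⟩
        have h01 : P0 < P1 := by
          have : P0.asIdeal < P1.asIdeal := by
            show (⊥ : Ideal (MvPolynomial (Fin m) k)) < Ideal.span {p}
            rw [bot_lt_iff_ne_bot]
            simpa [Ideal.span_singleton_eq_bot] using hp.ne_zero
          exact (PrimeSpectrum.asIdeal_lt_asIdeal _ _).mp this
        have h12 : P1 < P := by
          have hlt : P1.asIdeal < P.asIdeal := by
            refine lt_of_le_of_ne (Ideal.span_le.mpr (by simpa using hpP)) ?_
            intro hEq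
            have hfp1 : f ∈ P1.asIdeal := hEq.symm ▸ hfP
            exact hpf' (Ideal.mem_span_singleton.mp hfp1)
          exact (PrimeSpectrum.asIdeal_lt_asIdeal _ _).mp hlt
        let c : LTSeries (PrimeSpectrum (MvPolynomial (Fin m) k)) :=
          ⟨2, ![P0, P1, P], by
            intro i
            fin_cases i
            · simpa using h01
            · simpa using h12⟩
        have hc : c.last ≤ P := le_of_eq rfl
        have := Order.length_le_height hc
        exact this
      · -- I ≤ P
        have : idealHeight I ≤ Order.height P := iInf₂_le P hIP
        rw [hhtI] at this
        exact this
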